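/- Let A be an n×n matrix with |det A| > 1 that has a real eigenvalue λ with |λ| > 1 and eigenvector e₁ (in suitable coordinates). Then the set U = ((−|λ|,−1) ∪ (1,|λ|)) × ℝ^{n−1} tiles ℝⁿ by A-dilations, i.e., {A^j(U) : j ∈ ℤ} is a partition of ℝⁿ up to null sets. -/

import Mathlib

open MeasureTheory

lemma stmt17_aux_abs {lam t : ℝ} (hlam : 1 < |lam|) :
    (t ∈ Set.Ioo (-|lam|) (-1) ∪ Set.Ioo 1 |lam|) ↔ 1 < |t| ∧ |t| < |lam| := by
  rcases le_or_gt 0 t with h | h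
  · rw [abs_of_nonneg h]
    simp only [Set.mem_union, Set.mem_Ioo]
    constructor
    · rintro (⟨h1, h2⟩ | ⟨h1, h2⟩) <;> constructor <;> linarith
    · rintro ⟨h1, h2⟩; right; exact ⟨h1, h2⟩
  · rw [abs_of_neg h]
    simp only [Set.mem_union, Set.mem_Ioo]
    constructor
    · rintro (⟨h1, h2⟩ | ⟨h1, h2⟩) <;> constructor <;> linarith
    · rintro ⟨h1, h2⟩; left; exact ⟨by linarith, by linarith⟩

/-- Let `A` be an invertible matrix on `ℝⁿ` (`n = m+1 ≥ 1`) with `|det A| > 1`, having a real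
eigenvalue `λ` with `|λ| > 1` and eigenvector `e₁`, in coordinates where `A` acts on the
first coordinate by multiplication by `λ`. Then
`U = ((−|λ|, −1) ∪ (1, |λ|)) × ℝ^{n−1}` tiles `ℝⁿ` by `A`-dilations: for a.e. `x` there is a
unique `j ∈ ℤ` with `x ∈ A^j(U)`. -/
theorem stmt17 (m : ℕ)
    (A : (Fin (m + 1) → ℝ) ≃ₗ[ℝ] (Fin (m + 1) → ℝ))
    (hdet : 1 < |LinearMap.det A.toLinearMap|)
    (lam : ℝ) (hlam : 1 < |lam|)
    (heig : A (Pi.single 0 1) = lam • (Pi.single 0 1 : Fin (m + 1) → ℝ))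
    (hrow : ∀ x : Fin (m + 1) → ℝ, A x 0 = lam * x 0)
    (U : Set (Fin (m + 1) → ℝ))
    (hU : U = {x : Fin (m + 1) → ℝ |
      x 0 ∈ Set.Ioo (-|lam|) (-1) ∪ Set.Ioo 1 |lam|}) :
    ∀ᵐ x : Fin (m + 1) → ℝ, ∃! j : ℤ, x ∈ (A ^ j) '' U := by
  have hlam0 : lam ≠ 0 := by
    intro h; rw [h] at hlam; simp at hlam; linarith
  have hblt : (1 : ℝ) < |lam| := hlam
  have hb0 : (0 : ℝ) < |lam| := by positivity
  -- first coordinate of A ^ j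
  have hinv : ∀ x : Fin (m + 1) → ℝ, (A⁻¹ x) 0 = lam⁻¹ * x 0 := by
    intro x
    set y := A⁻¹ x with hy
    have h1 := hrow y
    have h2 : A y = x := A.apply_symm_apply x
    rw [h2] at h1
    rw [h1]
    field_simp
  have L1 : ∀ j : ℤ, ∀ x : Fin (m + 1) → ℝ, ((A ^ j) x) 0 = lam ^ j * x 0 := by
    intro j
    induction j using Int.induction_on with
    | zero => intro x; simp
    | succ n ih =>
      intro x
      have h : (A ^ ((n : ℤ) + 1)) x = (A ^ (n : ℤ)) (A x) := by
        rw [zpow_add_one]; rfl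
      rw [h, ih, hrow, zpow_add_one₀ hlam0]
      ring
    | pred n ih =>
      intro x
      have h : (A ^ (-(n : ℤ) - 1)) x = (A ^ (-(n : ℤ))) (A⁻¹ x) := by
        rw [zpow_sub_one]; rfl
      rw [h, ih, hinv, zpow_sub_one₀ hlam0]
      ring
  have habsz : ∀ j : ℤ, |lam ^ j| = |lam| ^ j := fun j =>
    map_zpow₀ (AbsoluteValue.abs : AbsoluteValue ℝ ℝ) lam j
  -- membership characterization
  have key : ∀ (j : ℤ) (x : Fin (m + 1) → ℝ),
      x ∈ (A ^ j) '' U ↔ |lam| ^ j < |x 0| ∧ |x 0| < |lam| ^ (j + 1) := by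
    intro j x
    have hpow : (0 : ℝ) < |lam| ^ j := zpow_pos hb0 j
    constructor
    · rintro ⟨y, hy, rfl⟩
      rw [hU] at hy
      have hy' := (stmt17_aux_abs hlam).1 hy
      have h0 : |((A ^ j) y) 0| = |lam| ^ j * |y 0| := by
        rw [L1 j y, abs_mul, habsz]
      rw [h0]
      constructor
      · nlinarith [hy'.1]
      · rw [zpow_add_one₀ (ne_of_gt hb0)]
        nlinarith [hy'.2]
    · rintro ⟨h1, h2⟩
      refine ⟨(A ^ j).symm x, ?_, (A ^ j).apply_symm_apply x⟩
      rw [hU]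
      have hx0 : x 0 = lam ^ j * ((A ^ j).symm x) 0 := by
        conv_lhs => rw [← (A ^ j).apply_symm_apply x]
        exact L1 j _
      have habs : |x 0| = |lam| ^ j * |((A ^ j).symm x) 0| := by
        rw [hx0, abs_mul, habsz]
      refine (stmt17_aux_abs hlam).2 ⟨?_, ?_⟩
      · rw [habs] at h1
        nlinarith [h1, hpow]
      · rw [habs, zpow_add_one₀ (ne_of_gt hb0)] at h2
        exact (mul_lt_mul_iff_right₀ hpow).1 h2
  -- the null exceptional set
  set T : Set ℝ := {0} ∪ ⋃ j : ℤ, {|lam| ^ j, -(|lam| ^ j)} with hT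
  have hTcount : T.Countable := by
    apply Set.Countable.union (Set.countable_singleton 0)
    exact Set.countable_iUnion fun j => (Set.countable_singleton _).insert _
  have hnull : ∀ c : ℝ, volume {x : Fin (m + 1) → ℝ | x 0 = c} = 0 := by
    intro c
    rw [volume_pi]
    exact Measure.pi_hyperplane (fun _ : Fin (m + 1) => (volume : Measure ℝ)) 0 c
  have hae : ∀ᵐ x : Fin (m + 1) → ℝ, x 0 ∉ T := by
    rw [ae_iff]
    have : {x : Fin (m + 1) → ℝ | ¬ x 0 ∉ T} = ⋃ c ∈ T, {x : Fin (m + 1) → ℝ | x 0 = c} := by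
      ext x
      simp only [Set.mem_setOf_eq, not_not, Set.mem_iUnion, exists_prop]
      exact ⟨fun h => ⟨x 0, h, rfl⟩, fun ⟨c, hc, h⟩ => h ▸ hc⟩
    rw [this]
    exact (measure_biUnion_null_iff hTcount).2 fun c _ => hnull c
  filter_upwards [hae] with x hx
  have hx0 : x 0 ≠ 0 := fun h => hx (Or.inl h)
  have hxne : ∀ j : ℤ, |x 0| ≠ |lam| ^ j := by
    intro j h
    rcases abs_eq (le_of_lt (zpow_pos hb0 j)) |>.1 h with h' | h'
    · exact hx (Or.inr (Set.mem_iUnion.2 ⟨j, Or.inl h'⟩))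
    · exact hx (Or.inr (Set.mem_iUnion.2 ⟨j, Or.inr h'⟩))
  have ht0 : 0 < |x 0| := abs_pos.2 hx0
  obtain ⟨j, hj1, hj2⟩ := exists_mem_Ico_zpow ht0 hblt
  refine ⟨j, (key j x).2 ⟨lt_of_le_of_ne hj1 (Ne.symm (hxne j)), hj2⟩, ?_⟩
  intro k hk
  rw [key k x] at hk
  have h1 : |lam| ^ k < |lam| ^ (j + 1) := lt_trans hk.1 hj2
  have h2 : |lam| ^ j < |lam| ^ (k + 1) :=
    lt_trans (lt_of_le_of_ne hj1 (Ne.symm (hxne j))) hk.2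
  rw [zpow_lt_zpow_iff_right₀ hblt] at h1 h2
  omega
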